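/- There is no reversed sum-product pair (a,b) for any base β ≥ 2 with a > β. Equivalently, every reversed sum-product pair a ≤ b for base β satisfies a < β. -/

import Mathlib

private lemma rsp_aux1 (a b S : ℤ) (h1 : (a-b)*S < a^2) (h2 : 2*a ≤ S) (h3 : b+1 ≤ a)
    (hb : 2 ≤ b) : a ≤ 2*b-1 := by
  by_contra hc
  push_neg at hc
  nlinarith [mul_nonneg (by linarith : (0:ℤ) ≤ a-2*b) (by linarith : (0:ℤ) ≤ a),
    mul_nonneg (by linarith : (0:ℤ) ≤ a-b) (by linarith : (0:ℤ) ≤ S-2*a)]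

private lemma rsp_aux2 (a b S : ℤ) (h1 : (a-b)*S < a^2) (h3 : b+1 ≤ a) (h4 : a ≤ 2*b-1)
    (hb : 2 ≤ b) : S < (b+1)^2 := by
  by_contra hc
  push_neg at hc
  nlinarith [mul_nonneg (by linarith : (0:ℤ) ≤ a-(b+1)) (by nlinarith : (0:ℤ) ≤ b*(b+1)-a),
    mul_nonneg (by linarith : (0:ℤ) ≤ a-b-1) (by linarith : (0:ℤ) ≤ S-(b+1)^2)]

private lemma rsp_aux3 (a b S : ℤ) (h1 : (a-b)*S < a^2) (h3 : b+2 ≤ a) (h4 : a ≤ 2*b-1)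
    (h5 : b^2 ≤ S) (hb : 5 ≤ b) : False := by
  nlinarith [mul_nonneg (by linarith : (0:ℤ) ≤ a-b-2) (by linarith : (0:ℤ) ≤ b-1-(a-b)),
    mul_nonneg (by linarith : (0:ℤ) ≤ a-b-2) (by nlinarith : (0:ℤ) ≤ b^2-3*b-1),
    mul_nonneg (by linarith : (0:ℤ) ≤ a-b) (by linarith : (0:ℤ) ≤ S-b^2)]

private lemma rsp_aux4 (b s0 s1 s2 : ℤ) (hb : 5 ≤ b) (h0l : 1 ≤ s0) (h0u : s0 ≤ b-1)
    (h1l : 0 ≤ s1) (h1u : s1 ≤ b-1) (h2l : 1 ≤ s2) (h2u : s2 ≤ b-1)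
    (E : (b+1) * (s0 + b*s1 + b^2*s2) = s2 + b*s1 + b^2*s0 + (b+1)^2) : False := by
  nlinarith [mul_nonneg (by linarith : (0:ℤ) ≤ b-1-s0) (by nlinarith : (0:ℤ) ≤ b^2-b-1),
    mul_nonneg h1l (by positivity : (0:ℤ) ≤ b^2),
    mul_nonneg (by linarith : (0:ℤ) ≤ s2-1) (by positivity : (0:ℤ) ≤ b^3),
    mul_nonneg (by linarith : (0:ℤ) ≤ s2-1) (by positivity : (0:ℤ) ≤ b^2)]

private lemma rsp_aux5 (a b S : ℤ) (h1 : (a-b)*S < a^2) (h4 : a ≤ 2*b-1) (hb : 5 ≤ b)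
    (h3 : b+1 ≤ a) : S < b^3 := by
  have h6 : S < (b+1)^2 := rsp_aux2 a b S h1 h3 h4 (by linarith)
  nlinarith [h6, sq_nonneg b]

/-- `(a, b)` is a reversed sum-product pair for base `β`: `a ≤ b` are positive
integers and the base-`β` digit sequence of `a * b` is the reverse of that of
`a + b` (in particular they have the same number of digits). -/
def IsRSP (β a b : ℕ) : Prop :=
  0 < a ∧ a ≤ b ∧ Nat.digits β (a * b) = (Nat.digits β (a + b)).reverse

set_option maxHeartbeats 2000000 in
theorem stmt_5 (β a b : ℕ) (hβ : 2 ≤ β) (h : IsRSP β a b) : a < β := by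
  obtain ⟨ha, hab, hrev⟩ := h
  by_contra hge
  push_neg at hge
  have hb1 : 1 < β := hβ
  have hb0 : 0 < b := lt_of_lt_of_le ha hab
  have hS0 : a + b ≠ 0 := by omega
  have hP0 : a * b ≠ 0 := by positivity
  have hSne : Nat.digits β (a + b) ≠ [] := Nat.digits_ne_nil_iff_ne_zero.mpr hS0
  -- the lowest digit of a*b is the leading digit of a+b, hence nonzero
  have hprem : a * b % β ≠ 0 := by
    have h1 : Nat.digits β (a * b) = a * b % β :: Nat.digits β (a * b / β) :=
      Nat.digits_def' hb1 (Nat.pos_of_ne_zero hP0)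
    have h4 : (Nat.digits β (a + b)).getLast? = some (a * b % β) := by
      rw [← List.head?_reverse, ← hrev, h1]; rfl
    have h5q : (Nat.digits β (a + b)).getLast? =
        some ((Nat.digits β (a + b)).getLast hSne) := List.getLast?_eq_getLast hSne
    have h5 : (Nat.digits β (a + b)).getLast hSne ≠ 0 := Nat.getLast_digit_ne_zero β hS0
    rw [h5q, Option.some_inj] at h4
    rw [h4] at h5
    exact h5
  have haβ : a ≠ β := by
    intro he
    exact hprem (by simp [he, Nat.mul_mod_right])
  have ha1 : β + 1 ≤ a := by omega
  -- digit lengths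
  set L := Nat.log β (a + b) with hL
  have hlenS : (Nat.digits β (a + b)).length = L + 1 := Nat.digits_len β _ hb1 hS0
  have hlenP : (Nat.digits β (a * b)).length = L + 1 := by
    rw [hrev, List.length_reverse, hlenS]
  have hlogP : Nat.log β (a * b) = L := by
    have := Nat.digits_len β (a * b) hb1 hP0; omega
  have hSl : β ^ L ≤ a + b := Nat.pow_log_le_self β hS0
  have hPu : a * b < β ^ (L + 1) := by
    have := Nat.lt_pow_succ_log_self hb1 (a * b)
    rwa [hlogP] at this
  have hPβS : a * b < β * (a + b) := by
    calc a * b < β ^ (L + 1) := hPu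
    _ = β * β ^ L := by ring
    _ ≤ β * (a + b) := Nat.mul_le_mul_left β hSl
  -- integer versions
  have hPβS' : (a:ℤ) * b < (β:ℤ) * ((a:ℤ) + b) := by exact_mod_cast hPβS
  have hkeyZ : ((a:ℤ) - β) * ((a:ℤ) + b) < (a:ℤ)^2 := by nlinarith [hPβS']
  have hS2a : 2 * (a:ℤ) ≤ (a:ℤ) + b := by
    have : a ≤ b := hab
    omega
  have ha1' : (β:ℤ) + 1 ≤ (a:ℤ) := by exact_mod_cast ha1
  have hb2' : (2:ℤ) ≤ (β:ℤ) := by exact_mod_cast hβ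
  have ha2b : (a:ℤ) ≤ 2 * (β:ℤ) - 1 := rsp_aux1 _ _ _ hkeyZ hS2a ha1' hb2'
  have hSlt : (a:ℤ) + (b:ℤ) < ((β:ℤ) + 1)^2 := rsp_aux2 _ _ _ hkeyZ ha1' ha2b hb2'
  by_cases hβ4 : β ≤ 4
  · -- finite check for β ∈ {2,3,4}
    have hSn : a + b < (β+1)^2 := by exact_mod_cast hSlt
    have haU : a ≤ 2*β-1 := by
      have : (a:ℤ) ≤ 2*(β:ℤ)-1 := ha2b
      omega
    interval_cases β <;> norm_num at hSn <;>
      [(have hbU : b ≤ 5 := by omega); (have hbU : b ≤ 11 := by omega);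
       (have hbU : b ≤ 19 := by omega)] <;>
      interval_cases a <;> interval_cases b <;> norm_num at hrev
  · have hβ5 : 5 ≤ β := by omega
    have hβ5' : (5:ℤ) ≤ (β:ℤ) := by exact_mod_cast hβ5
    -- L = 2
    have hLl : 2 ≤ L := by
      have h1 : β ^ 2 < β ^ (L + 1) := by
        calc β ^ 2 = β * β := sq β
        _ ≤ a * a := Nat.mul_le_mul (by omega) (by omega)
        _ ≤ a * b := Nat.mul_le_mul_left a hab
        _ < β ^ (L + 1) := hPu
      have := (Nat.pow_lt_pow_iff_right hb1).mp h1
      omega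
    have hLu : L ≤ 2 := by
      have h1 : β ^ L < β ^ 3 := by
        have hc : (a:ℤ) + (b:ℤ) < (β:ℤ)^3 := rsp_aux5 _ _ _ hkeyZ ha2b hβ5' ha1'
        have hc' : a + b < β ^ 3 := by exact_mod_cast hc
        omega
      have := (Nat.pow_lt_pow_iff_right hb1).mp h1
      omega
    have hL2 : L = 2 := le_antisymm hLu hLl
    have hSb2 : (β:ℤ)^2 ≤ (a:ℤ) + (b:ℤ) := by
      have : β ^ 2 ≤ a + b := by rw [← hL2]; exact hSl
      exact_mod_cast this
    -- a = β + 1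
    have haeq : (a:ℤ) = (β:ℤ) + 1 := by
      by_contra hc
      have hr2 : (β:ℤ) + 2 ≤ (a:ℤ) := by omega
      exact rsp_aux3 _ _ _ hkeyZ hr2 ha2b hSb2 hβ5'
    -- extract the three digits
    have hlen3 : (Nat.digits β (a + b)).length = 3 := by rw [hlenS, hL2]
    obtain ⟨s0, s1, s2, hdig⟩ := List.length_eq_three.mp hlen3
    have hm0 : s0 < β := Nat.digits_lt_base hb1 (by rw [hdig]; simp)
    have hm1 : s1 < β := Nat.digits_lt_base hb1 (by rw [hdig]; simp)
    have hm2 : s2 < β := Nat.digits_lt_base hb1 (by rw [hdig]; simp)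
    have hdigP : Nat.digits β (a * b) = [s2, s1, s0] := by rw [hrev, hdig]; rfl
    have hPne : Nat.digits β (a * b) ≠ [] := Nat.digits_ne_nil_iff_ne_zero.mpr hP0
    have hs2 : s2 ≠ 0 := by
      have h5q : (Nat.digits β (a + b)).getLast? =
          some ((Nat.digits β (a + b)).getLast hSne) := List.getLast?_eq_getLast hSne
      have h5 : (Nat.digits β (a + b)).getLast hSne ≠ 0 := Nat.getLast_digit_ne_zero β hS0
      have h6 : (Nat.digits β (a + b)).getLast? = some s2 := by rw [hdig]; rfl
      rw [h5q, Option.some_inj] at h6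
      exact fun hz => h5 (h6 ▸ hz)
    have hs0 : s0 ≠ 0 := by
      have h5q : (Nat.digits β (a * b)).getLast? =
          some ((Nat.digits β (a * b)).getLast hPne) := List.getLast?_eq_getLast hPne
      have h5 : (Nat.digits β (a * b)).getLast hPne ≠ 0 := Nat.getLast_digit_ne_zero β hP0
      have h6 : (Nat.digits β (a * b)).getLast? = some s0 := by rw [hdigP]; rfl
      rw [h5q, Option.some_inj] at h6
      exact fun hz => h5 (h6 ▸ hz)
    have hSval : a + b = s0 + β * s1 + β ^ 2 * s2 := by
      conv_lhs => rw [← Nat.ofDigits_digits β (a + b), hdig]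
      simp [Nat.ofDigits]
      ring
    have hPval : a * b = s2 + β * s1 + β ^ 2 * s0 := by
      conv_lhs => rw [← Nat.ofDigits_digits β (a * b), hdigP]
      simp [Nat.ofDigits]
      ring
    -- final contradiction
    have E : (a:ℤ) * ((a:ℤ) + (b:ℤ)) = (a:ℤ) * (b:ℤ) + (a:ℤ)^2 := by ring
    have hSZ : ((a:ℤ) + (b:ℤ)) = (s0:ℤ) + (β:ℤ) * (s1:ℤ) + (β:ℤ)^2 * (s2:ℤ) := by
      exact_mod_cast hSval
    have hPZ : ((a:ℤ) * (b:ℤ)) = (s2:ℤ) + (β:ℤ) * (s1:ℤ) + (β:ℤ)^2 * (s0:ℤ) := by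
      exact_mod_cast hPval
    rw [hSZ, hPZ, haeq] at E
    have E' : ((β:ℤ)+1) * ((s0:ℤ) + (β:ℤ)*(s1:ℤ) + (β:ℤ)^2*(s2:ℤ))
        = (s2:ℤ) + (β:ℤ)*(s1:ℤ) + (β:ℤ)^2*(s0:ℤ) + ((β:ℤ)+1)^2 := by linarith [E]
    exact rsp_aux4 (β:ℤ) (s0:ℤ) (s1:ℤ) (s2:ℤ) hβ5'
      (by exact_mod_cast Nat.one_le_iff_ne_zero.mpr hs0) (by have := hm0; omega)
      (by positivity) (by have := hm1; omega)
      (by exact_mod_cast Nat.one_le_iff_ne_zero.mpr hs2) (by have := hm2; omega) E'
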